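/- Let η > 0, α > 0, y > 0, x = α·y, and suppose the (constant) limit order book density satisfies ρ = (1+α)/(2η). Define the ask-price jump ΔS_ask = (1+α)·y/ρ, the book-value jump ΔS_book = ΔS_ask/2, and the fast trader's excess profit π̃ = α·y·(ΔS_ask/2) + (ρ/2)·((1−α)/(1+α))·(ΔS_ask)². Then ΔS_book = (η/α)·x and π̃ = η⁻¹·(ΔS_book)². -/

import Mathlib

/-- Optional-integration interpretation: with `x = α·y` and book density
`ρ = (1+α)/(2η)`, the book-value jump is `ΔS_book = (η/α)·x` and the fast trader's
excess profit is `π̃ = η⁻¹·(ΔS_book)²`. -/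
theorem stmt_7 (η α y x ρ ΔSask ΔSbook πt : ℝ)
    (hη : 0 < η) (hα : 0 < α) (hy : 0 < y)
    (hx : x = α * y)
    (hρ : ρ = (1 + α) / (2 * η))
    (hask : ΔSask = (1 + α) * y / ρ)
    (hbook : ΔSbook = ΔSask / 2)
    (hπ : πt = α * y * (ΔSask / 2) + (ρ / 2) * ((1 - α) / (1 + α)) * ΔSask ^ 2) :
    ΔSbook = (η / α) * x ∧ πt = η⁻¹ * ΔSbook ^ 2 := by
  have hα1 : (1 + α) ≠ 0 := by positivity
  have hηne : η ≠ 0 := hη.ne'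
  have hρval : ρ ≠ 0 := by
    rw [hρ]; positivity
  have haskval : ΔSask = 2 * η * y := by
    rw [hask, hρ]; field_simp
  subst hx hbook hπ
  constructor
  · rw [haskval]; field_simp
  · rw [haskval, hρ]; field_simp; ring
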